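/- arXiv:2508.16186 — 2 statements merged into one kernel-verified Lean document; each statement's English description precedes it below -/
import Mathlib

section
/- Let n ≥ 1 be an integer, let α₁, …, αₙ > 0 be real numbers and let τ₁, …, τₙ > 0 be pairwise distinct real numbers, and set S(t) = Σᵢ₌₁ⁿ αᵢ · h(t/τᵢ) for t ∈ ℝ. Then the set of points t > 0 at which S is not differentiable is exactly ⋃ᵢ₌₁ⁿ {τᵢ, 4τᵢ}. -/
/-- The inverse hyperbolic tangent. -/
noncomputable def artanh (x : ℝ) : ℝ := (1 / 2) * Real.log ((1 + x) / (1 - x))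

/-- The Hall distribution pdf. -/
noncomputable def hallPdf (t : ℝ) : ℝ :=
  if t < 1 then 0
  else if t < 4 then 2 * Real.log t / t ^ 2
  else 2 * Real.log t / t ^ 2 - 4 / t ^ 2 * artanh (Real.sqrt (1 - 4 / t))

open Real hiding artanh
open Set Filter

lemma artanh_zero : artanh 0 = 0 := by simp [artanh]

lemma half_le_artanh {x : ℝ} (hx : 0 ≤ x) (hx1 : x < 1) : x / 2 ≤ artanh x := by
  have hy : (0:ℝ) < (1 - x) / (1 + x) := div_pos (by linarith) (by linarith)
  have h := Real.log_le_sub_one_of_pos hy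
  have hlog : Real.log ((1 + x) / (1 - x)) = - Real.log ((1 - x) / (1 + x)) := by
    rw [← Real.log_inv]; congr 1; field_simp
  have h2 : x ≤ Real.log ((1 + x) / (1 - x)) := by
    rw [hlog]
    have : (1 - x) / (1 + x) - 1 = -(2 * x) / (1 + x) := by field_simp; ring
    rw [this] at h
    have hx' : 2 * x / (1 + x) ≥ x := by
      rw [ge_iff_le, le_div_iff₀ (by linarith)]
      nlinarith
    have hne : -(2 * x) / (1 + x) = -(2 * x / (1 + x)) := neg_div _ _
    rw [hne] at h
    linarith
  unfold artanh; linarith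

lemma hallPdf_of_le_one {t : ℝ} (h : t ≤ 1) : hallPdf t = 0 := by
  rcases lt_or_eq_of_le h with h' | h'
  · simp [hallPdf, h']
  · subst h'; norm_num [hallPdf]

lemma hallPdf_of_mem {t : ℝ} (h1 : 1 ≤ t) (h4 : t < 4) :
    hallPdf t = 2 * Real.log t / t ^ 2 := by
  simp [hallPdf, not_lt.2 h1, h4]

lemma hallPdf_of_four_le {t : ℝ} (h : 4 ≤ t) :
    hallPdf t = 2 * Real.log t / t ^ 2 - 4 / t ^ 2 * artanh (Real.sqrt (1 - 4 / t)) := by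
  have h1 : ¬ t < 1 := by linarith
  have h4 : ¬ t < 4 := by linarith
  simp [hallPdf, h1, h4]

lemma mid_hasDerivAt {t : ℝ} (ht : 0 < t) :
    HasDerivAt (fun s : ℝ => 2 * Real.log s / s ^ 2) ((2 - 4 * Real.log t) / t ^ 3) t := by
  have h1 : HasDerivAt (fun s : ℝ => 2 * Real.log s) (2 / t) t := by
    have := (Real.hasDerivAt_log ht.ne').const_mul 2
    rwa [div_eq_mul_inv]
  have h2 : HasDerivAt (fun s : ℝ => s ^ 2) (2 * t) t := by
    simpa using hasDerivAt_pow 2 t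
  have h := h1.fun_div h2 (by positivity)
  refine h.congr_deriv ?_
  field_simp
  ring

lemma hallPdf_hasDerivWithinAt_Ici_one : HasDerivWithinAt hallPdf 2 (Ici 1) 1 := by
  have h2 : HasDerivWithinAt (fun s : ℝ => 2 * Real.log s / s ^ 2) 2 (Ici 1) 1 := by
    have := (mid_hasDerivAt one_pos).hasDerivWithinAt (s := Ici 1)
    norm_num at this
    exact this
  refine h2.congr_of_eventuallyEq ?_ ?_
  · refine Filter.eventuallyEq_of_mem
      (inter_mem self_mem_nhdsWithin
        (mem_nhdsWithin_of_mem_nhds (Iio_mem_nhds (show (1:ℝ) < 4 by norm_num)))) ?_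
    intro y hy
    exact hallPdf_of_mem hy.1 hy.2
  · rw [hallPdf_of_mem le_rfl (by norm_num)]

lemma hallPdf_diffWithin_Ici_one : DifferentiableWithinAt ℝ hallPdf (Ici 1) 1 :=
  hallPdf_hasDerivWithinAt_Ici_one.differentiableWithinAt

lemma hallPdf_not_differentiableAt_one : ¬ DifferentiableAt ℝ hallPdf 1 := by
  intro h
  have hd : HasDerivAt hallPdf (deriv hallPdf 1) 1 := h.hasDerivAt
  have hleft : HasDerivWithinAt hallPdf 0 (Iic 1) 1 :=
    (hasDerivWithinAt_const 1 (Iic 1) 0).congr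
      (fun y hy => hallPdf_of_le_one hy) (hallPdf_of_le_one le_rfl)
  have e1 : deriv hallPdf 1 = 0 :=
    (uniqueDiffOn_Iic (1:ℝ) 1 self_mem_Iic).eq_deriv _ hd.hasDerivWithinAt hleft
  have e2 : deriv hallPdf 1 = 2 :=
    (uniqueDiffOn_Ici (1:ℝ) 1 self_mem_Ici).eq_deriv _ hd.hasDerivWithinAt
      hallPdf_hasDerivWithinAt_Ici_one
  rw [e1] at e2
  norm_num at e2

lemma top_differentiableAt {t : ℝ} (ht : 4 < t) :
    DifferentiableAt ℝ
      (fun s : ℝ => 2 * Real.log s / s ^ 2 - 4 / s ^ 2 * artanh (Real.sqrt (1 - 4 / s))) t := by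
  have ht0 : (0:ℝ) < t := by linarith
  have hx0 : 0 < 1 - 4 / t := by
    rw [sub_pos, div_lt_one ht0]; linarith
  have hs0 : 0 < Real.sqrt (1 - 4 / t) := Real.sqrt_pos.2 hx0
  have hs1 : Real.sqrt (1 - 4 / t) < 1 := by
    have h1 : 1 - 4 / t < 1 := by
      have : 0 < 4 / t := by positivity
      linarith
    calc Real.sqrt (1 - 4 / t) < Real.sqrt 1 := Real.sqrt_lt_sqrt hx0.le h1
      _ = 1 := Real.sqrt_one
  have hinner : DifferentiableAt ℝ (fun s : ℝ => 1 - 4 / s) t :=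
    (differentiableAt_const _).sub ((differentiableAt_const _).div differentiableAt_id ht0.ne')
  have hsqrt : DifferentiableAt ℝ (fun s : ℝ => Real.sqrt (1 - 4 / s)) t :=
    hinner.sqrt hx0.ne'
  have hfrac : DifferentiableAt ℝ
      (fun s : ℝ => (1 + Real.sqrt (1 - 4 / s)) / (1 - Real.sqrt (1 - 4 / s))) t :=
    ((differentiableAt_const _).add hsqrt).div ((differentiableAt_const _).sub hsqrt)
      (sub_ne_zero.mpr hs1.ne')
  have hfracpos : 0 < (1 + Real.sqrt (1 - 4 / t)) / (1 - Real.sqrt (1 - 4 / t)) :=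
    div_pos (by linarith) (by linarith)
  have hart : DifferentiableAt ℝ (fun s : ℝ => artanh (Real.sqrt (1 - 4 / s))) t := by
    have heq : (fun s : ℝ => artanh (Real.sqrt (1 - 4 / s))) =
        fun s => (1/2) * Real.log ((1 + Real.sqrt (1 - 4/s)) / (1 - Real.sqrt (1 - 4/s))) := rfl
    rw [heq]
    exact (hfrac.log hfracpos.ne').const_mul _
  have hmid : DifferentiableAt ℝ (fun s : ℝ => 2 * Real.log s / s ^ 2) t :=
    (mid_hasDerivAt ht0).differentiableAt
  exact hmid.sub ((((differentiableAt_const _).div (differentiableAt_id.pow 2)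
    (by positivity)).mul hart))

lemma hallPdf_differentiableAt {t : ℝ} (h1 : t ≠ 1) (h4 : t ≠ 4) :
    DifferentiableAt ℝ hallPdf t := by
  rcases lt_trichotomy t 1 with h | h | h
  · have heq : hallPdf =ᶠ[nhds t] fun _ => (0:ℝ) :=
      Filter.eventuallyEq_of_mem (Iio_mem_nhds h) fun y hy => hallPdf_of_le_one (le_of_lt hy)
    exact (differentiableAt_const 0).congr_of_eventuallyEq heq
  · exact absurd h h1
  · rcases lt_trichotomy t 4 with h' | h' | h'
    · have heq : hallPdf =ᶠ[nhds t] fun s => 2 * Real.log s / s ^ 2 :=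
        Filter.eventuallyEq_of_mem (Ioo_mem_nhds h h') fun y hy => hallPdf_of_mem hy.1.le hy.2
      exact ((mid_hasDerivAt (by linarith)).differentiableAt).congr_of_eventuallyEq heq
    · exact absurd h' h4
    · have heq : hallPdf =ᶠ[nhds t]
          fun s => 2 * Real.log s / s ^ 2 - 4 / s ^ 2 * artanh (Real.sqrt (1 - 4 / s)) :=
        Filter.eventuallyEq_of_mem (Ioi_mem_nhds h') fun y hy => hallPdf_of_four_le (le_of_lt hy)
      exact (top_differentiableAt h').congr_of_eventuallyEq heq

lemma hallPdf_not_diffWithin_Ici_four : ¬ DifferentiableWithinAt ℝ hallPdf (Ici 4) 4 := by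
  intro h
  set G : ℝ → ℝ := fun s => hallPdf s - 2 * Real.log s / s ^ 2 with hGdef
  have hGdiff : DifferentiableWithinAt ℝ G (Ici 4) 4 :=
    h.sub (mid_hasDerivAt (by norm_num : (0:ℝ) < 4)).differentiableAt.differentiableWithinAt
  have hd := hGdiff.hasDerivWithinAt
  have hslope := hasDerivWithinAt_iff_tendsto_slope.1 hd
  have hset : (Ici (4:ℝ)) \ {4} = Ioi 4 := by
    ext x
    simp only [mem_diff, mem_Ici, mem_singleton_iff, mem_Ioi]
    constructor
    · rintro ⟨h1, h2⟩; exact lt_of_le_of_ne h1 (Ne.symm h2)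
    · intro h1; exact ⟨h1.le, ne_of_gt h1⟩
  rw [hset] at hslope
  have hG4 : G 4 = 0 := by
    simp only [hGdef]
    rw [hallPdf_of_four_le le_rfl]
    norm_num [_root_.artanh_zero]
  have key : ∀ s ∈ Ioo (4:ℝ) 5, slope G 4 s ≤ -((2/75) * (Real.sqrt (s-4))⁻¹) := by
    intro s hs
    obtain ⟨hs4, hs5⟩ := hs
    have hs4' : 0 < s - 4 := by linarith
    have hs0 : (0:ℝ) < s := by linarith
    have hr0 : 0 < Real.sqrt (s-4) := Real.sqrt_pos.2 hs4'
    have hrr : Real.sqrt (s-4) * Real.sqrt (s-4) = s - 4 := Real.mul_self_sqrt hs4'.le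
    have hx0' : 0 ≤ 1 - 4/s := by
      rw [sub_nonneg, div_le_one hs0]; linarith
    have hx1 : Real.sqrt (1 - 4/s) < 1 := by
      have h1 : 1 - 4/s < 1 := by
        have : 0 < 4 / s := by positivity
        linarith
      calc Real.sqrt (1 - 4/s) < Real.sqrt 1 := Real.sqrt_lt_sqrt hx0' h1
        _ = 1 := Real.sqrt_one
    have hGs : G s = -(4 / s^2 * artanh (Real.sqrt (1-4/s))) := by
      simp only [hGdef]
      rw [hallPdf_of_four_le hs4.le]
      ring
    have hxval : Real.sqrt (1 - 4/s) = Real.sqrt (s-4) / Real.sqrt s := by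
      rw [show 1 - 4/s = (s-4)/s by field_simp, Real.sqrt_div hs4'.le]
    have hS0 : 0 < Real.sqrt s := Real.sqrt_pos.2 hs0
    have hSle : Real.sqrt s ≤ 3 := by
      rw [show (3:ℝ) = Real.sqrt 9 by
        rw [show (9:ℝ) = 3^2 by norm_num, Real.sqrt_sq (by norm_num : (0:ℝ) ≤ 3)]]
      exact Real.sqrt_le_sqrt (by linarith)
    have hxge : Real.sqrt (s-4) / 3 ≤ Real.sqrt (1 - 4/s) := by
      rw [hxval]
      gcongr
    have hA : Real.sqrt (s-4)/6 ≤ artanh (Real.sqrt (1-4/s)) := by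
      have h2 := half_le_artanh (Real.sqrt_nonneg (1-4/s)) hx1
      linarith
    have hGle : G s ≤ -((2/75) * Real.sqrt (s-4)) := by
      rw [hGs]
      have hs2 : s^2 ≤ 25 := by nlinarith
      have hs2p : (0:ℝ) < s^2 := by positivity
      have h45 : 4/25 ≤ 4/s^2 := by gcongr <;> norm_num
      have hA0 : (0:ℝ) ≤ artanh (Real.sqrt (1-4/s)) := le_trans (by positivity) hA
      have hmul := mul_le_mul h45 hA (by positivity) (by positivity)
      linarith
    calc slope G 4 s = G s / (s-4) := by rw [slope_def_field, hG4, sub_zero]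
      _ ≤ (-((2/75) * Real.sqrt (s-4))) / (s-4) := (div_le_div_iff_of_pos_right hs4').2 hGle
      _ = -((2/75) * (Real.sqrt (s-4))⁻¹) := by
          field_simp
          linear_combination (-1:ℝ) * hrr
  have hev : ∀ᶠ s in nhdsWithin 4 (Ioi 4),
      slope G 4 s ≤ -((2/75) * (Real.sqrt (s-4))⁻¹) := by
    filter_upwards [Ioo_mem_nhdsGT_of_mem (show (4:ℝ) ∈ Ico (4:ℝ) 5 by
      constructor <;> norm_num)] with s hs
    exact key s hs
  have h1 : Tendsto (fun s : ℝ => Real.sqrt (s-4)) (nhdsWithin 4 (Ioi 4))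
      (nhdsWithin 0 (Ioi 0)) := by
    rw [tendsto_nhdsWithin_iff]
    constructor
    · have hc : Continuous (fun s : ℝ => Real.sqrt (s - 4)) :=
        Real.continuous_sqrt.comp (continuous_id.sub continuous_const)
      have h0 := hc.tendsto 4
      rw [show (4:ℝ) - 4 = 0 by norm_num, Real.sqrt_zero] at h0
      exact h0.mono_left nhdsWithin_le_nhds
    · filter_upwards [self_mem_nhdsWithin] with s hs
      exact Real.sqrt_pos.2 (by simp only [mem_Ioi] at hs; linarith)
  have h3 : Tendsto (fun s : ℝ => (Real.sqrt (s-4))⁻¹) (nhdsWithin 4 (Ioi 4)) atTop :=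
    tendsto_inv_nhdsGT_zero.comp h1
  have h4 : Tendsto (fun s : ℝ => (2/75) * (Real.sqrt (s-4))⁻¹) (nhdsWithin 4 (Ioi 4)) atTop :=
    h3.const_mul_atTop (by norm_num)
  have hbot : Tendsto (fun s : ℝ => -((2/75) * (Real.sqrt (s-4))⁻¹))
      (nhdsWithin 4 (Ioi 4)) atBot := tendsto_neg_atTop_atBot.comp h4
  have hfinal : Tendsto (slope G 4) (nhdsWithin 4 (Ioi 4)) atBot :=
    tendsto_atBot_mono' _ hev hbot
  exact not_tendsto_atBot_of_tendsto_nhds hslope hfinal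

/-- For pairwise distinct scaling parameters, the set of points of non-differentiability of a
finite positive combination of scaled Hall distributions on `(0, ∞)` is exactly
`⋃ i, {τ i, 4 τ i}`. -/
theorem hall_sum_nonsmooth_set (n : ℕ) (hn : 1 ≤ n) (α τ : Fin n → ℝ)
    (hα : ∀ i, 0 < α i) (hτ : ∀ i, 0 < τ i) (hdist : Function.Injective τ) :
    {t : ℝ | 0 < t ∧
        ¬ DifferentiableAt ℝ (fun s : ℝ => ∑ i, α i * hallPdf (s / τ i)) t}
      = ⋃ i, ({τ i, 4 * τ i} : Set ℝ) := by
  ext t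
  simp only [mem_setOf_eq, mem_iUnion, mem_insert_iff, mem_singleton_iff]
  constructor
  · rintro ⟨ht, hnd⟩
    by_contra hc
    push_neg at hc
    apply hnd
    apply DifferentiableAt.fun_sum
    intro i _
    have h1 : t / τ i ≠ 1 := by
      intro h
      rw [div_eq_one_iff_eq (hτ i).ne'] at h
      exact (hc i).1 h
    have h4 : t / τ i ≠ 4 := by
      intro h
      rw [div_eq_iff (hτ i).ne'] at h
      exact (hc i).2 h
    exact ((hallPdf_differentiableAt h1 h4).comp (f := fun s : ℝ => s / τ i) t (differentiableAt_fun_id.div_const _)).const_mul _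
  · rintro ⟨i, hi⟩
    have ht : 0 < t := by
      rcases hi with h | h
      · rw [h]; exact hτ i
      · rw [h]; linarith [hτ i]
    refine ⟨ht, ?_⟩
    by_cases hR : ∃ j, t = 4 * τ j
    · obtain ⟨j, hj⟩ := hR
      intro hdiff
      apply hallPdf_not_diffWithin_Ici_four
      have hrest : DifferentiableWithinAt ℝ
          (fun s => ∑ k ∈ Finset.univ.erase j, α k * hallPdf (s / τ k)) (Ici t) t := by
        apply DifferentiableWithinAt.fun_sum
        intro k hk
        have hk' : k ≠ j := Finset.ne_of_mem_erase hk
        by_cases htk : τ k = t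
        · -- kink term, but still right-differentiable
          have hmaps : MapsTo (fun s : ℝ => s / τ k) (Ici t) (Ici 1) := by
            intro s hs
            simp only [mem_Ici] at *
            rw [le_div_iff₀ (hτ k)]
            rw [htk]; linarith
          have hg : DifferentiableWithinAt ℝ hallPdf (Ici 1) ((fun s : ℝ => s / τ k) t) := by
            have : t / τ k = 1 := by rw [← htk, div_self (hτ k).ne']
            simpa [this] using hallPdf_diffWithin_Ici_one
          exact ((hg.comp t ((differentiableAt_id.div_const _).differentiableWithinAt)
            hmaps)).const_mul _
        · have h1 : t / τ k ≠ 1 := by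
            intro h
            rw [div_eq_one_iff_eq (hτ k).ne'] at h
            exact htk h.symm
          have h4 : t / τ k ≠ 4 := by
            intro h
            rw [div_eq_iff (hτ k).ne'] at h
            have : τ k = τ j := by
              have := hj.symm.trans h
              linarith
            exact hk' (hdist this)
          exact (((hallPdf_differentiableAt h1 h4).comp (f := fun s : ℝ => s / τ k) t
            (differentiableAt_fun_id.div_const _)).const_mul _).differentiableWithinAt
      have hterm : DifferentiableWithinAt ℝ (fun s => α j * hallPdf (s / τ j)) (Ici t) t := by
        have heq : (fun s : ℝ => α j * hallPdf (s / τ j)) =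
            fun s => (∑ k, α k * hallPdf (s / τ k))
              - ∑ k ∈ Finset.univ.erase j, α k * hallPdf (s / τ k) := by
          funext s
          rw [eq_sub_iff_add_eq]
          exact Finset.add_sum_erase _ (fun k => α k * hallPdf (s / τ k)) (Finset.mem_univ j)
        rw [heq]
        exact hdiff.differentiableWithinAt.sub hrest
      have hhh : DifferentiableWithinAt ℝ (fun s => hallPdf (s / τ j)) (Ici t) t := by
        have h2 := hterm.const_mul (α j)⁻¹
        have heq : (fun s => (α j)⁻¹ * (α j * hallPdf (s / τ j)))
            = fun s => hallPdf (s / τ j) := by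
          funext s
          rw [← mul_assoc, inv_mul_cancel₀ (hα j).ne', one_mul]
        rwa [heq] at h2
      have hmaps2 : MapsTo (fun u : ℝ => τ j * u) (Ici 4) (Ici t) := by
        intro u hu
        simp only [mem_Ici] at *
        rw [hj]
        nlinarith [hτ j]
      have hg2 : DifferentiableWithinAt ℝ (fun s => hallPdf (s / τ j)) (Ici t)
          ((fun u : ℝ => τ j * u) 4) := by
        have : τ j * 4 = t := by rw [hj]; ring
        simpa [this] using hhh
      have hcomp := hg2.comp 4
        ((differentiableAt_id.const_mul (τ j)).differentiableWithinAt) hmaps2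
      have heq2 : ((fun s => hallPdf (s / τ j)) ∘ fun u : ℝ => τ j * u) = hallPdf := by
        funext u
        simp only [Function.comp_apply]
        rw [mul_div_cancel_left₀ _ (hτ j).ne']
      rwa [heq2] at hcomp
    · have hti : t = τ i := by
        rcases hi with h | h
        · exact h
        · exact absurd ⟨i, h⟩ hR
      intro hdiff
      apply hallPdf_not_differentiableAt_one
      have hrest : DifferentiableAt ℝ
          (fun s => ∑ k ∈ Finset.univ.erase i, α k * hallPdf (s / τ k)) t := by
        apply DifferentiableAt.fun_sum
        intro k hk
        have hk' : k ≠ i := Finset.ne_of_mem_erase hk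
        have h1 : t / τ k ≠ 1 := by
          intro h
          rw [div_eq_one_iff_eq (hτ k).ne'] at h
          exact hk' (hdist (by rw [← h, ← hti]))
        have h4 : t / τ k ≠ 4 := by
          intro h
          rw [div_eq_iff (hτ k).ne'] at h
          exact hR ⟨k, h⟩
        exact ((hallPdf_differentiableAt h1 h4).comp (f := fun s : ℝ => s / τ k) t
          (differentiableAt_fun_id.div_const _)).const_mul _
      have hterm : DifferentiableAt ℝ (fun s => α i * hallPdf (s / τ i)) t := by
        have heq : (fun s : ℝ => α i * hallPdf (s / τ i)) =
            fun s => (∑ k, α k * hallPdf (s / τ k))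
              - ∑ k ∈ Finset.univ.erase i, α k * hallPdf (s / τ k) := by
          funext s
          rw [eq_sub_iff_add_eq]
          exact Finset.add_sum_erase _ (fun k => α k * hallPdf (s / τ k)) (Finset.mem_univ i)
        rw [heq]
        exact hdiff.sub hrest
      have hhh : DifferentiableAt ℝ (fun s => hallPdf (s / τ i)) t := by
        have h2 := hterm.const_mul (α i)⁻¹
        have heq : (fun s => (α i)⁻¹ * (α i * hallPdf (s / τ i)))
            = fun s => hallPdf (s / τ i) := by
          funext s
          rw [← mul_assoc, inv_mul_cancel₀ (hα i).ne', one_mul]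
        rwa [heq] at h2
      have hg2 : DifferentiableAt ℝ (fun s => hallPdf (s / τ i)) ((fun u : ℝ => τ i * u) 1) := by
        have : τ i * 1 = t := by rw [hti, mul_one]
        simpa [this] using hhh
      have hcomp := hg2.comp 1 (differentiableAt_id.const_mul (τ i))
      have heq2 : ((fun s => hallPdf (s / τ i)) ∘ fun u : ℝ => τ i * u) = hallPdf := by
        funext u
        simp only [Function.comp_apply]
        rw [mul_div_cancel_left₀ _ (hτ i).ne']
      rwa [heq2] at hcomp
end

section
/- Let τ₁, τ₂ > 0 be real numbers with τ₁ ≠ τ₂. If there exists a point t₀ > 0 such that both functions t ↦ h(t/τ₁) and t ↦ h(t/τ₂) fail to be differentiable at t₀, then τ₁ = 4τ₂ or τ₂ = 4τ₁. -/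
lemma hallPdf_diff {x : ℝ} (hx0 : 0 < x) (h1 : x ≠ 1) (h4 : x ≠ 4) :
    DifferentiableAt ℝ hallPdf x := by
  rcases lt_trichotomy x 1 with hlt | heq | hgt
  · -- locally zero
    have hev : hallPdf =ᶠ[nhds x] (fun _ => (0:ℝ)) := by
      filter_upwards [(isOpen_lt continuous_id continuous_const).mem_nhds hlt] with t ht
      simp only [id_eq] at ht
      simp [hallPdf, ht]
    exact (differentiableAt_const 0).congr_of_eventuallyEq hev
  · exact absurd heq h1
  · rcases lt_trichotomy x 4 with hlt4 | heq4 | hgt4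
    · have hev : hallPdf =ᶠ[nhds x] (fun t => 2 * Real.log t / t ^ 2) := by
        have hmem : {t : ℝ | 1 < t ∧ t < 4} ∈ nhds x :=
          ((isOpen_lt continuous_const continuous_id).inter
            (isOpen_lt continuous_id continuous_const)).mem_nhds ⟨hgt, hlt4⟩
        filter_upwards [hmem] with t ht
        simp [hallPdf, not_lt.mpr ht.1.le, ht.2]
      have hd : DifferentiableAt ℝ (fun t : ℝ => 2 * Real.log t / t ^ 2) x := by
        have hx : x ≠ 0 := by positivity
        exact ((differentiableAt_const 2).mul (Real.differentiableAt_log hx)).div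
          (differentiableAt_pow 2) (pow_ne_zero 2 hx)
      exact hd.congr_of_eventuallyEq hev
    · exact absurd heq4 h4
    · have hev : hallPdf =ᶠ[nhds x]
          (fun t => 2 * Real.log t / t ^ 2 - 4 / t ^ 2 * artanh (Real.sqrt (1 - 4 / t))) := by
        filter_upwards [(isOpen_lt continuous_const continuous_id).mem_nhds hgt4] with t ht
        simp only [id_eq] at ht
        have h1t : ¬ t < 1 := by linarith
        have h4t : ¬ t < 4 := by linarith
        simp [hallPdf, h1t, h4t]
      have hx : x ≠ 0 := by positivity
      have hlog : DifferentiableAt ℝ (fun t : ℝ => 2 * Real.log t / t ^ 2) x :=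
        ((differentiableAt_const 2).mul (Real.differentiableAt_log hx)).div
          (differentiableAt_pow 2) (pow_ne_zero 2 hx)
      -- inner: 1 - 4/t
      have hinner : DifferentiableAt ℝ (fun t : ℝ => 1 - 4 / t) x :=
        (differentiableAt_const 1).sub ((differentiableAt_const 4).div differentiableAt_id hx)
      have hpos : (0:ℝ) < 1 - 4 / x := by
        have : 4 / x < 1 := (div_lt_one hx0).mpr hgt4
        linarith
      have hsqrt : DifferentiableAt ℝ (fun t : ℝ => Real.sqrt (1 - 4 / t)) x :=
        hinner.sqrt (ne_of_gt hpos)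
      have hslt1 : Real.sqrt (1 - 4 / x) < 1 := by
        have h41 : 1 - 4 / x < 1 := by
          have : 0 < 4 / x := by positivity
          linarith
        calc Real.sqrt (1 - 4 / x) < Real.sqrt 1 := by
              exact Real.sqrt_lt_sqrt hpos.le h41
          _ = 1 := Real.sqrt_one
      have hsnn : (0:ℝ) ≤ Real.sqrt (1 - 4 / x) := Real.sqrt_nonneg _
      have hcomp : DifferentiableAt ℝ (fun t : ℝ => artanh (Real.sqrt (1 - 4 / t))) x := by
        have hden : (1 : ℝ) - Real.sqrt (1 - 4 / x) ≠ 0 := by linarith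
        have hq : (1 + Real.sqrt (1 - 4 / x)) / (1 - Real.sqrt (1 - 4 / x)) ≠ 0 :=
          div_ne_zero (by linarith) hden
        simp only [artanh]
        have hr : DifferentiableAt ℝ
            (fun t : ℝ => (1 + Real.sqrt (1 - 4 / t)) / (1 - Real.sqrt (1 - 4 / t))) x :=
          ((differentiableAt_const 1).add hsqrt).div
            ((differentiableAt_const 1).sub hsqrt) hden
        exact (differentiableAt_const ((1:ℝ)/2)).mul
          (by have := (Real.differentiableAt_log hq).comp x hr; exact this)
      have hfrac : DifferentiableAt ℝ (fun t : ℝ => 4 / t ^ 2) x :=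
        (differentiableAt_const 4).div (differentiableAt_pow 2) (pow_ne_zero 2 hx)
      exact (hlog.sub (hfrac.mul hcomp)).congr_of_eventuallyEq hev

lemma scaled_nondiff {τ t₀ : ℝ} (hτ : 0 < τ) (ht₀ : 0 < t₀)
    (hnd : ¬ DifferentiableAt ℝ (fun t : ℝ => hallPdf (t / τ)) t₀) :
    t₀ / τ = 1 ∨ t₀ / τ = 4 := by
  by_contra hcon
  push_neg at hcon
  apply hnd
  have hx0 : 0 < t₀ / τ := div_pos ht₀ hτ
  exact (hallPdf_diff hx0 hcon.1 hcon.2).comp t₀ (differentiableAt_id.div_const τ)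

/-- If two distinctly-scaled Hall distributions share a point of non-differentiability,
then one scaling parameter is four times the other. -/
theorem hall_shared_nonsmooth_point (τ₁ τ₂ : ℝ) (hτ₁ : 0 < τ₁) (hτ₂ : 0 < τ₂)
    (hne : τ₁ ≠ τ₂)
    (h : ∃ t₀ : ℝ, 0 < t₀ ∧
        ¬ DifferentiableAt ℝ (fun t : ℝ => hallPdf (t / τ₁)) t₀ ∧
        ¬ DifferentiableAt ℝ (fun t : ℝ => hallPdf (t / τ₂)) t₀) :
    τ₁ = 4 * τ₂ ∨ τ₂ = 4 * τ₁ := by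
  obtain ⟨t₀, ht₀, hnd₁, hnd₂⟩ := h
  have h1 := scaled_nondiff hτ₁ ht₀ hnd₁
  have h2 := scaled_nondiff hτ₂ ht₀ hnd₂
  have hτ₁' : τ₁ ≠ 0 := ne_of_gt hτ₁
  have hτ₂' : τ₂ ≠ 0 := ne_of_gt hτ₂
  rcases h1 with h1 | h1 <;> rcases h2 with h2 | h2
  · exfalso; apply hne; field_simp at h1 h2; linarith
  · left; field_simp at h1 h2; linarith
  · right; field_simp at h1 h2; linarith
  · exfalso; apply hne; field_simp at h1 h2; linarith
end
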